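/- Let $\mu_1, \mu_2, \mu_3$ be real numbers with $\mu_1 + \mu_2 + \mu_3 = 3$ and $\mu_1 \ge \mu_2 \ge \mu_3$, $\mu_1 > 3$, $\mu_3 < 0$. Define $S_2 = \mu_1\mu_2 + \mu_2\mu_3 + \mu_1\mu_3$ and $S_3 = \mu_1\mu_2\mu_3$. If $\mu_3 \le -\frac{\mu_1 - 3}{2} - (\mu_1 - 1)\sqrt{\frac{3(\mu_1-3)}{4(3\mu_1-1)}}$, then $S_2 - 3S_3 \ge 0$. -/

import Mathlib

theorem stmt_3 (m1 m2 m3 : ℝ) (hsum : m1 + m2 + m3 = 3) (h12 : m2 ≤ m1) (h23 : m3 ≤ m2)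
    (h1 : 3 < m1) (h3 : m3 < 0)
    (hcond : m3 ≤ -((m1 - 3) / 2) - (m1 - 1) * Real.sqrt (3 * (m1 - 3) / (4 * (3 * m1 - 1)))) :
    0 ≤ (m1 * m2 + m2 * m3 + m1 * m3) - 3 * (m1 * m2 * m3) := by
  set t := Real.sqrt (3 * (m1 - 3) / (4 * (3 * m1 - 1))) with ht
  have hden : 0 < 4 * (3 * m1 - 1) := by linarith
  have harg : 0 ≤ 3 * (m1 - 3) / (4 * (3 * m1 - 1)) := div_nonneg (by linarith) (by linarith)
  have ht0 : 0 ≤ t := Real.sqrt_nonneg _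
  have ht2 : t ^ 2 = 3 * (m1 - 3) / (4 * (3 * m1 - 1)) := Real.sq_sqrt harg
  have ht2' : t ^ 2 * (4 * (3 * m1 - 1)) = 3 * (m1 - 3) := by
    rw [ht2]; exact div_mul_cancel₀ _ hden.ne'
  have h2 : m2 = 3 - m1 - m3 := by linarith
  subst h2
  have hf1 : m3 + (m1 - 3) / 2 + (m1 - 1) * t ≤ 0 := by linarith
  have hf2 : m3 + (m1 - 3) / 2 - (m1 - 1) * t ≤ 0 := by nlinarith
  have hP : 0 ≤ (-(m3 + (m1 - 3) / 2 + (m1 - 1) * t)) * (-(m3 + (m1 - 3) / 2 - (m1 - 1) * t)) :=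
    mul_nonneg (neg_nonneg.2 hf1) (neg_nonneg.2 hf2)
  have hP2 : 0 ≤ (3 * m1 - 1) *
      ((-(m3 + (m1 - 3) / 2 + (m1 - 1) * t)) * (-(m3 + (m1 - 3) / 2 - (m1 - 1) * t))) :=
    mul_nonneg (by linarith) hP
  have key : (m1 - 1) ^ 2 * (3 * m1 - 1) * (t ^ 2 * (4 * (3 * m1 - 1)))
      = (m1 - 1) ^ 2 * (3 * m1 - 1) * (3 * (m1 - 3)) := by rw [ht2']
  nlinarith [hP2, key, sq_nonneg (2 * m3 + m1 - 3)]
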